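/- Let k > 0 and p be a rational with 1+√2 < p < (3+√5)/2. Then s = 0, r = −k(p−1)⁴/(2p(p²−3p+1)), t = k(p²+2p−1)(p²−2p−1)(p²−4p+1)²/(16p²(p²−3p+1)²), a = −2(p−1)²p/((p²+1)(p²−4p+1)), b = −(p−1)³(p+1)/((p²+1)(p²−4p+1)) satisfy: r > 0, t > 0, a > 0, s² + t² is a rational square, (s−r)² + t² is a rational square, (s/(2a) + bt)² + (at)² is a rational square w₃², and r + √(s²+t²) + √((s−r)²+t²) = 2(r/(2a) + w₃). -/

import Mathlib

set_option maxHeartbeats 2000000 in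
/-- A parametric rational right-triangle–parallelogram pair with the same area and
the same perimeter (Case 4.3.1). -/
theorem stmt16 (k p : ℚ) (hk : 0 < k)
    (hp1 : 1 + Real.sqrt 2 < (p : ℝ)) (hp2 : (p : ℝ) < (3 + Real.sqrt 5)/2) :
    let s : ℚ := 0
    let r : ℚ := -(k*(p-1)^4/(2*p*(p^2-3*p+1)))
    let t : ℚ := k*(p^2+2*p-1)*(p^2-2*p-1)*(p^2-4*p+1)^2/(16*p^2*(p^2-3*p+1)^2)
    let a : ℚ := -(2*(p-1)^2*p/((p^2+1)*(p^2-4*p+1)))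
    let b : ℚ := -((p-1)^3*(p+1)/((p^2+1)*(p^2-4*p+1)))
    0 < r ∧ 0 < t ∧ 0 < a ∧
    ∃ w₁ w₂ w₃ : ℚ, 0 ≤ w₁ ∧ 0 ≤ w₂ ∧ 0 ≤ w₃ ∧
      s^2 + t^2 = w₁^2 ∧
      (s - r)^2 + t^2 = w₂^2 ∧
      (s/(2*a) + b*t)^2 + (a*t)^2 = w₃^2 ∧
      r + w₁ + w₂ = 2*(r/(2*a) + w₃) := by
  intro s r t a b
  -- real square-root facts
  have hs2 : (0:ℝ) ≤ Real.sqrt 2 := Real.sqrt_nonneg 2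
  have hs2' : Real.sqrt 2 ^ 2 = 2 := Real.sq_sqrt (by norm_num)
  have hs5 : (0:ℝ) ≤ Real.sqrt 5 := Real.sqrt_nonneg 5
  have hs5' : Real.sqrt 5 ^ 2 = 5 := Real.sq_sqrt (by norm_num)
  have h2R : (2:ℝ) < ((p:ℝ) - 1)^2 := by nlinarith
  have h5R : (2*(p:ℝ) - 3)^2 < 5 := by
    have hlt : 2*(p:ℝ) - 3 < Real.sqrt 5 := by linarith
    have hgt : -(Real.sqrt 5) < 2*(p:ℝ) - 3 := by nlinarith
    calc (2*(p:ℝ) - 3)^2 < Real.sqrt 5 ^ 2 := sq_lt_sq' hgt hlt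
      _ = 5 := hs5'
  have hb1R : ((241/100 : ℚ) : ℝ) < ((p:ℚ):ℝ) := by push_cast; nlinarith
  have hb2R : ((p:ℚ):ℝ) < ((262/100 : ℚ) : ℝ) := by push_cast; nlinarith
  -- rational facts
  have hA : (2:ℚ) < (p - 1)^2 := by
    have h := h2R
    rw [show ((p:ℝ) - 1)^2 = (((p - 1)^2 : ℚ) : ℝ) by push_cast; ring] at h
    exact_mod_cast h
  have hB : ((2*p - 3)^2 : ℚ) < 5 := by
    have h := h5R
    rw [show (2*(p:ℝ) - 3)^2 = (((2*p - 3)^2 : ℚ) : ℝ) by push_cast; ring] at h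
    exact_mod_cast h
  have hb1 : (241/100:ℚ) < p := by exact_mod_cast hb1R
  have hb2 : p < 262/100 := by exact_mod_cast hb2R
  have h0 : 0 < p := by linarith
  have hm1 : 0 < p - 1 := by linarith
  have h2 : 0 < p^2 - 2*p - 1 := by nlinarith
  have h3 : p^2 - 3*p + 1 < 0 := by nlinarith
  have h4 : p^2 - 4*p + 1 < 0 := by nlinarith
  have h5 : 0 < p^2 + 2*p - 1 := by nlinarith
  have h6 : (0:ℚ) < p^2 + 1 := by positivity
  have hG : 0 < p^8 - 8*p^7 + 44*p^6 - 152*p^5 + 246*p^4 - 152*p^3 + 44*p^2 - 8*p + 1 := by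
    nlinarith [sq_nonneg (p^2 - 5*p + 25/4), sq_nonneg (p - 5/2), sq_nonneg ((p - 5/2)^2),
      mul_pos (sub_pos.2 hb1) (sub_pos.2 hb2), sq_nonneg (p^3 - 15/2*p^2 + 75/4*p),
      sq_nonneg (p^4 - 4*p^3 + 14*p^2 - 4*p + 1)]
  -- nonzeroness
  have hp0 : p ≠ 0 := ne_of_gt h0
  have hpm1 : p - 1 ≠ 0 := ne_of_gt hm1
  have h3' : p^2 - 3*p + 1 ≠ 0 := ne_of_lt h3
  have h4' : p^2 - 4*p + 1 ≠ 0 := ne_of_lt h4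
  have h6' : p^2 + 1 ≠ 0 := ne_of_gt h6
  have hr : 0 < r := by
    have hnum : 0 < k*(p-1)^4 := by positivity
    have hden : 2*p*(p^2-3*p+1) < 0 := by nlinarith
    have : k*(p-1)^4/(2*p*(p^2-3*p+1)) < 0 := div_neg_of_pos_of_neg hnum hden
    simpa [r] using neg_pos.2 this
  have ht : 0 < t := by
    have hq3 : (0:ℚ) < (p^2-4*p+1)^2 := by positivity
    have hden : (0:ℚ) < 16*p^2*(p^2-3*p+1)^2 := by positivity
    have hnum : 0 < k*(p^2+2*p-1)*(p^2-2*p-1)*(p^2-4*p+1)^2 := by positivity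
    exact div_pos hnum hden
  have ha : 0 < a := by
    have hnum : 0 < 2*(p-1)^2*p := by positivity
    have hden : (p^2+1)*(p^2-4*p+1) < 0 := mul_neg_of_pos_of_neg h6 h4
    have : 2*(p-1)^2*p/((p^2+1)*(p^2-4*p+1)) < 0 := div_neg_of_pos_of_neg hnum hden
    simpa [a] using neg_pos.2 this
  refine ⟨hr, ht, ha, t,
    k*(p^8 - 8*p^7 + 44*p^6 - 152*p^5 + 246*p^4 - 152*p^3 + 44*p^2 - 8*p + 1)/(16*p^2*(p^2-3*p+1)^2),
    -(t*(p-1)^2/(p^2-4*p+1)), le_of_lt ht, ?_, ?_, ?_, ?_, ?_, ?_⟩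
  · positivity
  · have : t*(p-1)^2/(p^2-4*p+1) < 0 :=
      div_neg_of_pos_of_neg (by positivity) h4
    linarith
  · simp [s]
  · simp only [s, r, t]
    have h3'' : p * (p - 3) + 1 ≠ 0 := fun h => h3' (by linear_combination h)
    have h4'' : p * (p - 4) + 1 ≠ 0 := fun h => h4' (by linear_combination h)
    field_simp
    ring
  · simp only [s, t, a, b]
    have h3'' : p * (p - 3) + 1 ≠ 0 := fun h => h3' (by linear_combination h)
    have h4'' : p * (p - 4) + 1 ≠ 0 := fun h => h4' (by linear_combination h)
    field_simp
    ring
  · have hk' : k ≠ 0 := ne_of_gt hk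
    simp only [s, r, t, a]
    field_simp
    ring
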